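/- There is a bijection between the set of Motzkin paths from (0,0) to (n-1,0) and the set of noncrossing partitions of {1,…,n} with no block containing two consecutive integers. -/

import Mathlib

/-- A partition of the `n` points `{0,…,n-1}` given by its finite set of blocks. -/
def IsPartition (n : ℕ) (P : Finset (Finset (Fin n))) : Prop :=
  (∀ B ∈ P, B.Nonempty) ∧ ∀ i : Fin n, ∃! B, B ∈ P ∧ i ∈ B

/-- No block contains two consecutive integers. -/
def NoConsec (n : ℕ) (P : Finset (Finset (Fin n))) : Prop :=
  ∀ B ∈ P, ∀ i ∈ B, ∀ j ∈ B, (i : ℕ) + 1 ≠ (j : ℕ)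

/-- The partition is noncrossing: no `a < b < c < d` with `a,c` in one block
and `b,d` in a different block. -/
def NCPart (n : ℕ) (P : Finset (Finset (Fin n))) : Prop :=
  ∀ B ∈ P, ∀ C ∈ P, B ≠ C →
    ∀ a ∈ B, ∀ c ∈ B, ∀ b ∈ C, ∀ d ∈ C, ¬(a < b ∧ b < c ∧ c < d)

/-- The partition is self-complementary: applying `j ↦ n+1-j` (here `Fin.rev`)
inside each block yields the same partition. -/
def SelfCompl (n : ℕ) (P : Finset (Finset (Fin n))) : Prop :=
  P.image (fun B => B.image Fin.rev) = P

/-- `w` is a Motzkin path with `m` steps: each step is `(1,1)`, `(1,-1)` or `(1,0)`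
(recorded by its height change), all partial sums are nonnegative, and the path
ends at height `0`. -/
def IsMotzkin (m : ℕ) (w : Fin m → ℤ) : Prop :=
  (∀ i, w i = 1 ∨ w i = -1 ∨ w i = 0) ∧
  (∀ k : ℕ, 0 ≤ ∑ i ∈ Finset.univ.filter (fun i : Fin m => (i : ℕ) < k), w i) ∧
  ∑ i, w i = 0

namespace S12
def Wof (m : ℕ) (w : Fin m → ℤ) : ℕ → ℤ := fun i => if h : i < m then w ⟨i, h⟩ else 0
def Hgt (W : ℕ → ℤ) (k : ℕ) : ℤ := ∑ i ∈ Finset.range k, W i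
def IsCl (W : ℕ → ℤ) (x : ℕ) : Prop := 0 < x ∧ W (x - 1) = -1
instance (W : ℕ → ℤ) : DecidablePred (IsCl W) := fun _ => instDecidableAnd
def predN (W : ℕ → ℤ) (y : ℕ) : ℕ :=
  Nat.findGreatest (fun t => Hgt W t ≤ Hgt W y) (y - 1)
lemma predN_lt {W : ℕ → ℤ} {y : ℕ} (h : 0 < y) : predN W y < y :=
  lt_of_le_of_lt (Nat.findGreatest_le _) (by omega)
def rootN (W : ℕ → ℤ) (x : ℕ) : ℕ :=
  if h : IsCl W x then rootN W (predN W x) else x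
termination_by x
decreasing_by exact predN_lt h.1
lemma rootN_of_cl {W x} (h : IsCl W x) : rootN W x = rootN W (predN W x) := by
  rw [rootN]; simp [h]
lemma rootN_of_not {W x} (h : ¬ IsCl W x) : rootN W x = x := by
  rw [rootN]; simp [h]
lemma rootN_le (W : ℕ → ℤ) (x : ℕ) : rootN W x ≤ x := by
  induction x using Nat.strong_induction_on with
  | _ x ih =>
    by_cases h : IsCl W x
    · rw [rootN_of_cl h]
      exact le_of_lt (lt_of_le_of_lt (ih _ (predN_lt h.1)) (predN_lt h.1))
    · rw [rootN_of_not h]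
structure GoodW (m : ℕ) (W : ℕ → ℤ) : Prop where
  steps : ∀ i, W i = 1 ∨ W i = -1 ∨ W i = 0
  nonneg : ∀ k, 0 ≤ Hgt W k
  zero : ∀ k, m ≤ k → W k = 0
  last : Hgt W m = 0
lemma Hgt_succ (W : ℕ → ℤ) (k : ℕ) : Hgt W (k + 1) = Hgt W k + W k :=
  Finset.sum_range_succ _ _

section Good
variable {m : ℕ} {W : ℕ → ℤ} (hg : GoodW m W)

/-- height just before a down step -/
lemma Hgt_cl (hg : GoodW m W) {y : ℕ} (hy : IsCl W y) : Hgt W (y - 1) = Hgt W y + 1 := by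
  have h3 : y - 1 + 1 = y := by have := hy.1; omega
  have h4 := Hgt_succ W (y - 1)
  rw [h3, hy.2] at h4
  omega

lemma Hgt0 (W : ℕ → ℤ) : Hgt W 0 = 0 := by simp [Hgt]

lemma predN_H (hg : GoodW m W) {y : ℕ} (hy : 0 < y) : Hgt W (predN W y) ≤ Hgt W y := by
  have h0 : Hgt W 0 ≤ Hgt W y := by rw [Hgt0]; exact hg.nonneg y
  simp only [predN]
  exact Nat.findGreatest_spec (P := fun t => Hgt W t ≤ Hgt W y) (Nat.zero_le _) h0

lemma predN_between (hg : GoodW m W) {y t : ℕ} (h1 : predN W y < t) (h2 : t < y) :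
    Hgt W y < Hgt W t := by
  by_contra hc
  push_neg at hc
  simp only [predN] at h1
  exact Nat.findGreatest_is_greatest (P := fun t => Hgt W t ≤ Hgt W y) h1 (by omega) hc

/-- matched predecessor of a closer: the step there is up, heights agree -/
lemma predN_up (hg : GoodW m W) {y : ℕ} (hy : IsCl W y) :
    W (predN W y) = 1 ∧ Hgt W (predN W y) = Hgt W y := by
  have hlt : predN W y < y := predN_lt hy.1
  have hne : predN W y ≠ y - 1 := by
    intro h
    have h5 := Hgt_cl hg hy
    have h6 := predN_H hg hy.1
    rw [h] at h6
    omega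
  set p := predN W y with hp
  have hp1 : p + 1 < y := by omega
  have h1 : Hgt W y < Hgt W (p + 1) := predN_between hg (by omega) hp1
  have h2 : Hgt W p ≤ Hgt W y := predN_H hg hy.1
  have hs := Hgt_succ W p
  rcases hg.steps p with h | h | h
  · constructor
    · exact h
    · rw [h] at hs; omega
  · rw [h] at hs; omega
  · rw [h] at hs; omega

lemma predN_inj (hg : GoodW m W) {y y' : ℕ} (hy : IsCl W y) (hy' : IsCl W y')
    (h : predN W y = predN W y') : y = y' := by
  rcases lt_trichotomy y y' with hlt | he | hlt
  · exfalso
    have h1 : Hgt W y = Hgt W (predN W y) := (predN_up hg hy).2.symm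
    have h2 : Hgt W (predN W y') = Hgt W y' := (predN_up hg hy').2
    have hb : Hgt W y' < Hgt W y :=
      predN_between hg (h ▸ predN_lt hy.1 : predN W y' < y) hlt
    rw [h, h2] at h1
    omega
  · exact he
  · exfalso
    have h1 : Hgt W y' = Hgt W (predN W y') := (predN_up hg hy').2.symm
    have h2 : Hgt W (predN W y) = Hgt W y := (predN_up hg hy).2
    have hb : Hgt W y < Hgt W y' :=
      predN_between hg (h ▸ predN_lt hy'.1 : predN W y < y') hlt
    rw [← h, h2] at h1
    omega

/-- heights are constant on a block -/
lemma rootN_H (hg : GoodW m W) (x : ℕ) : Hgt W (rootN W x) = Hgt W x := by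
  induction x using Nat.strong_induction_on with
  | _ x ih =>
    by_cases h : IsCl W x
    · rw [rootN_of_cl h, ih _ (predN_lt h.1), (predN_up hg h).2]
    · rw [rootN_of_not h]

/-- closers stay within range -/
lemma cl_le (hg : GoodW m W) {y : ℕ} (hy : IsCl W y) : y ≤ m := by
  by_contra hc
  push_neg at hc
  have := hg.zero (y - 1) (by omega)
  rw [hy.2] at this
  omega

/-- every up step is matched: there is a closer with that predecessor -/
lemma matched (hg : GoodW m W) {i : ℕ} (hi : W i = 1) :
    ∃ y, IsCl W y ∧ y ≤ m ∧ predN W y = i ∧ i < y := by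
  have him : i < m := by
    by_contra hc
    push_neg at hc
    have := hg.zero i hc
    omega
  have hex : ∃ t, i < t ∧ Hgt W t ≤ Hgt W i :=
    ⟨m, him, by rw [hg.last]; exact hg.nonneg i⟩
  classical
  set y := Nat.find hex with hy
  obtain ⟨hiy, hHy⟩ : i < y ∧ Hgt W y ≤ Hgt W i := Nat.find_spec hex
  have hmin : ∀ t, i < t → t < y → Hgt W i < Hgt W t := by
    intro t h1 h2
    by_contra hc
    push_neg at hc
    exact Nat.find_min hex h2 ⟨h1, hc⟩
  have hym : y ≤ m := Nat.find_le ⟨him, by rw [hg.last]; exact hg.nonneg i⟩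
  have hi1 : Hgt W (i + 1) = Hgt W i + 1 := by rw [Hgt_succ, hi]
  have hyi2 : i + 1 < y := by
    rcases Nat.lt_or_ge (i+1) y with h | h
    · exact h
    · exfalso; have : y = i + 1 := by omega
      rw [this, hi1] at hHy; omega
  have hy1 : Hgt W i < Hgt W (y - 1) := hmin _ (by omega) (by omega)
  have hstep : Hgt W y = Hgt W (y - 1) + W (y - 1) := by
    have : y - 1 + 1 = y := by omega
    rw [← this, Hgt_succ]; simp [this]
  have hcl : IsCl W y := by
    constructor
    · omega
    · rcases hg.steps (y - 1) with h | h | h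
      · rw [h] at hstep; omega
      · exact h
      · rw [h] at hstep; omega
  have hHyi : Hgt W y = Hgt W i := by
    rw [hcl.2] at hstep; omega
  refine ⟨y, hcl, hym, ?_, hiy⟩
  -- predN W y = i
  have hge : i ≤ predN W y := by
    simp only [predN]
    exact Nat.le_findGreatest (P := fun t => Hgt W t ≤ Hgt W y) (by omega) (by rw [hHyi])
  have hle : predN W y ≤ i := by
    by_contra hc
    push_neg at hc
    have h2 := predN_H hg hcl.1
    have h3 := hmin (predN W y) hc (predN_lt hcl.1)
    rw [hHyi] at h2
    omega
  omega

/-- key interval lemma: if b lies strictly between the root of y's block and y,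
and b is not in y's block, then Hgt at b is strictly larger -/
lemma between_higher (hg : GoodW m W) :
    ∀ y b, rootN W y < b → b < y → rootN W b ≠ rootN W y → Hgt W y < Hgt W b := by
  intro y
  induction y using Nat.strong_induction_on with
  | _ y ih =>
    intro b h1 h2 h3
    have hcl : IsCl W y := by
      by_contra hc
      rw [rootN_of_not hc] at h1
      omega
    have hroot : rootN W (predN W y) = rootN W y := (rootN_of_cl hcl).symm
    rcases lt_trichotomy (predN W y) b with hp | hp | hp
    · exact predN_between hg hp h2
    · exact absurd (hp ▸ hroot) h3
    · have := ih (predN W y) (predN_lt hcl.1) b (hroot ▸ h1) hp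
        (by rw [hroot]; exact h3)
      rw [(predN_up hg hcl).2] at this
      exact this

/-- if x < y are in the same block, then the step at x is up -/
lemma same_block_up (hg : GoodW m W) :
    ∀ y x, x < y → rootN W x = rootN W y → W x = 1 := by
  intro y
  induction y using Nat.strong_induction_on with
  | _ y ih =>
    intro x hxy hr
    have hcl : IsCl W y := by
      by_contra hc
      rw [rootN_of_not hc] at hr
      have := rootN_le W x
      omega
    have hroot : rootN W (predN W y) = rootN W y := (rootN_of_cl hcl).symm
    rcases lt_trichotomy (predN W y) x with hp | hp | hp
    · exfalso
      have hb := predN_between hg hp hxy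
      have h1 := rootN_H hg x
      have h2 := rootN_H hg y
      rw [hr] at h1
      omega
    · rw [← hp]
      exact (predN_up hg hcl).1
    · exact ih (predN W y) (predN_lt hcl.1) x hp (hroot ▸ hr)

/-- x is not a closer iff it's the root of its own block -/
lemma root_eq_self_iff {x : ℕ} : rootN W x = x ↔ ¬ IsCl W x := by
  constructor
  · intro h hc
    have := rootN_of_cl hc
    have h2 := rootN_le W (predN W x)
    have h3 := predN_lt (W := W) hc.1
    omega
  · exact rootN_of_not

/-- being below something in the same block means being a closer -/
lemma nonmin_closer {x y : ℕ} (hxy : y < x) (hr : rootN W x = rootN W y) :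
    IsCl W x := by
  by_contra hc
  rw [rootN_of_not hc] at hr
  have := rootN_le W y
  omega

end Good

/-! ### the partition associated to a path -/

def blkN (W : ℕ → ℤ) (n : ℕ) (x : Fin n) : Finset (Fin n) :=
  Finset.univ.filter (fun y => rootN W (y : ℕ) = rootN W (x : ℕ))

def PsiP (W : ℕ → ℤ) (n : ℕ) : Finset (Finset (Fin n)) :=
  Finset.univ.image (blkN W n)

lemma mem_blkN {W : ℕ → ℤ} {n : ℕ} {x y : Fin n} :
    y ∈ blkN W n x ↔ rootN W (y : ℕ) = rootN W (x : ℕ) := by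
  simp [blkN]

lemma blkN_eq_of_root {W : ℕ → ℤ} {n : ℕ} {x y : Fin n}
    (h : rootN W (y : ℕ) = rootN W (x : ℕ)) : blkN W n y = blkN W n x := by
  ext z; simp [mem_blkN, h]

lemma PsiP_isPartition (W : ℕ → ℤ) (n : ℕ) : IsPartition n (PsiP W n) := by
  constructor
  · intro B hB
    simp only [PsiP, Finset.mem_image] at hB
    obtain ⟨x, _, rfl⟩ := hB
    exact ⟨x, mem_blkN.2 rfl⟩
  · intro i
    refine ⟨blkN W n i, ⟨?_, mem_blkN.2 rfl⟩, ?_⟩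
    · simp only [PsiP, Finset.mem_image]
      exact ⟨i, Finset.mem_univ _, rfl⟩
    · rintro B ⟨hB, hiB⟩
      simp only [PsiP, Finset.mem_image] at hB
      obtain ⟨x, _, rfl⟩ := hB
      exact (blkN_eq_of_root (mem_blkN.1 hiB)).symm ▸ rfl

lemma PsiP_noConsec {m : ℕ} {W : ℕ → ℤ} (hg : GoodW m W) (n : ℕ) :
    NoConsec n (PsiP W n) := by
  intro B hB i hi j hj hij
  simp only [PsiP, Finset.mem_image] at hB
  obtain ⟨x, _, rfl⟩ := hB
  have h1 : rootN W (i : ℕ) = rootN W (j : ℕ) := by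
    rw [mem_blkN.1 hi, mem_blkN.1 hj]
  have hlt : (i : ℕ) < (j : ℕ) := by omega
  have hup : W (i : ℕ) = 1 := same_block_up hg _ _ hlt h1
  have hcl : IsCl W (j : ℕ) := nonmin_closer hlt h1.symm
  have := hcl.2
  rw [← hij] at this
  simp at this
  omega

lemma PsiP_nc {m : ℕ} {W : ℕ → ℤ} (hg : GoodW m W) (n : ℕ) :
    NCPart n (PsiP W n) := by
  intro B hB C hC hBC a ha c hc b hb d hd ⟨hab, hbc, hcd⟩
  simp only [PsiP, Finset.mem_image] at hB hC
  obtain ⟨x, _, rfl⟩ := hB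
  obtain ⟨x', _, rfl⟩ := hC
  have hac : rootN W (a : ℕ) = rootN W (c : ℕ) := by
    rw [mem_blkN.1 ha, mem_blkN.1 hc]
  have hbd : rootN W (b : ℕ) = rootN W (d : ℕ) := by
    rw [mem_blkN.1 hb, mem_blkN.1 hd]
  have hr : rootN W (b : ℕ) ≠ rootN W (c : ℕ) := by
    intro h
    exact hBC (blkN_eq_of_root (by rw [← mem_blkN.1 hc, ← h, mem_blkN.1 hb])).symm
  have hab' : (a : ℕ) < (b : ℕ) := hab
  have hbc' : (b : ℕ) < (c : ℕ) := hbc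
  have hcd' : (c : ℕ) < (d : ℕ) := hcd
  have h1 : Hgt W (c : ℕ) < Hgt W (b : ℕ) := by
    refine between_higher hg _ _ ?_ hbc' hr
    have := rootN_le W (a : ℕ)
    rw [hac] at this
    omega
  have h2 : Hgt W (d : ℕ) < Hgt W (c : ℕ) := by
    refine between_higher hg _ _ ?_ hcd' (by rw [← hbd]; exact fun h => hr h.symm)
    have := rootN_le W (b : ℕ)
    rw [hbd] at this
    omega
  have h3 : Hgt W (b : ℕ) = Hgt W (d : ℕ) := by
    have e1 := rootN_H hg (b : ℕ)
    have e2 := rootN_H hg (d : ℕ)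
    rw [← e1, ← e2, hbd]
  omega

/-! ### relating `IsMotzkin` to `GoodW` -/

lemma sum_filter_eq_Hgt {m : ℕ} (w : Fin m → ℤ) (k : ℕ) :
    ∑ i ∈ Finset.univ.filter (fun i : Fin m => (i : ℕ) < k), w i
      = Hgt (Wof m w) (min k m) := by
  rw [Finset.sum_filter]
  have h1 : ∀ i : Fin m, (if (i : ℕ) < k then w i else 0)
      = (fun j : ℕ => if j < k then Wof m w j else 0) (i : ℕ) := by
    intro i
    simp only [Wof, i.isLt, dif_pos]
  rw [Finset.sum_congr rfl (fun i _ => h1 i),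
    Fin.sum_univ_eq_sum_range (fun j => if j < k then Wof m w j else 0) m]
  rw [← Finset.sum_filter]
  have h2 : (Finset.range m).filter (fun j => j < k) = Finset.range (min k m) := by
    ext j; simp; omega
  rw [h2]
  rfl

lemma Hgt_min {m : ℕ} {W : ℕ → ℤ} (hz : ∀ k, m ≤ k → W k = 0) (k : ℕ) :
    Hgt W k = Hgt W (min k m) := by
  rcases le_total k m with h | h
  · rw [min_eq_left h]
  · rw [min_eq_right h]
    unfold Hgt
    rw [← Finset.sum_subset (Finset.range_subset_range.2 h)]
    intro x _ hx
    simp only [Finset.mem_range, not_lt] at hx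
    exact hz x hx

lemma Hgt_last {m : ℕ} (w : Fin m → ℤ) : Hgt (Wof m w) m = ∑ i, w i := by
  unfold Hgt
  rw [← Fin.sum_univ_eq_sum_range (fun j => Wof m w j) m]
  refine Finset.sum_congr rfl (fun i _ => ?_)
  simp [Wof, i.isLt]

lemma goodW_of_motzkin {m : ℕ} {w : Fin m → ℤ} (hw : IsMotzkin m w) :
    GoodW m (Wof m w) := by
  have hz : ∀ k, m ≤ k → Wof m w k = 0 := by
    intro k hk; simp [Wof]; omega
  refine ⟨?_, ?_, hz, ?_⟩
  · intro i
    by_cases h : i < m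
    · simpa [Wof, h] using hw.1 ⟨i, h⟩
    · right; right; simp [Wof, h]
  · intro k
    rw [Hgt_min hz k, ← sum_filter_eq_Hgt]
    exact hw.2.1 k
  · rw [Hgt_last]; exact hw.2.2

lemma motzkin_of_goodW {m : ℕ} {w : Fin m → ℤ} (hg : GoodW m (Wof m w)) :
    IsMotzkin m w := by
  refine ⟨?_, ?_, ?_⟩
  · intro i
    have := hg.steps (i : ℕ)
    simpa [Wof, i.isLt] using this
  · intro k
    rw [sum_filter_eq_Hgt]
    exact hg.nonneg _
  · rw [← Hgt_last]; exact hg.last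

/-! ### nonmax / nonmin characterizations -/

def NMax (n : ℕ) (P : Finset (Finset (Fin n))) (x : Fin n) : Prop :=
  ∃ B ∈ P, x ∈ B ∧ ∃ y ∈ B, x < y

def NMin (n : ℕ) (P : Finset (Finset (Fin n))) (x : Fin n) : Prop :=
  ∃ B ∈ P, x ∈ B ∧ ∃ y ∈ B, y < x

lemma psi_nmax {m n : ℕ} {W : ℕ → ℤ} (hg : GoodW m W) (hmn : m < n) (x : Fin n) :
    NMax n (PsiP W n) x ↔ W (x : ℕ) = 1 := by
  constructor
  · rintro ⟨B, hB, hxB, y, hyB, hxy⟩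
    simp only [PsiP, Finset.mem_image] at hB
    obtain ⟨z, _, rfl⟩ := hB
    have h1 : rootN W (x : ℕ) = rootN W (y : ℕ) := by
      rw [mem_blkN.1 hxB, mem_blkN.1 hyB]
    exact same_block_up hg _ _ hxy h1
  · intro hx
    obtain ⟨y, hcl, hym, hpred, hxy⟩ := matched hg hx
    have hyn : y < n := by omega
    refine ⟨blkN W n x, ?_, mem_blkN.2 rfl, ⟨y, hyn⟩, ?_, ?_⟩
    · simp only [PsiP, Finset.mem_image]; exact ⟨x, Finset.mem_univ _, rfl⟩
    · refine mem_blkN.2 ?_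
      show rootN W y = rootN W (x : ℕ)
      rw [rootN_of_cl hcl, hpred]
    · show (x : ℕ) < y
      exact hxy

lemma psi_nmin {m n : ℕ} {W : ℕ → ℤ} (hg : GoodW m W) (x : Fin n) :
    NMin n (PsiP W n) x ↔ IsCl W (x : ℕ) := by
  constructor
  · rintro ⟨B, hB, hxB, y, hyB, hyx⟩
    simp only [PsiP, Finset.mem_image] at hB
    obtain ⟨z, _, rfl⟩ := hB
    have h1 : rootN W (x : ℕ) = rootN W (y : ℕ) := by
      rw [mem_blkN.1 hxB, mem_blkN.1 hyB]
    exact nonmin_closer hyx h1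
  · intro hcl
    have hp : predN W (x : ℕ) < (x : ℕ) := predN_lt hcl.1
    refine ⟨blkN W n x, ?_, mem_blkN.2 rfl, ⟨predN W (x : ℕ), by omega⟩, ?_, ?_⟩
    · simp only [PsiP, Finset.mem_image]; exact ⟨x, Finset.mem_univ _, rfl⟩
    · refine mem_blkN.2 ?_
      show rootN W (predN W (x : ℕ)) = rootN W (x : ℕ)
      exact (rootN_of_cl hcl).symm
    · show predN W (x : ℕ) < (x : ℕ)
      exact hp

/-- Ψ is injective -/
lemma psi_inj {n : ℕ} (hn : 1 ≤ n) {w w' : Fin (n-1) → ℤ}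
    (hw : IsMotzkin (n-1) w) (hw' : IsMotzkin (n-1) w')
    (h : PsiP (Wof (n-1) w) n = PsiP (Wof (n-1) w') n) : w = w' := by
  have hmn : n - 1 < n := by omega
  have hg := goodW_of_motzkin hw
  have hg' := goodW_of_motzkin hw'
  funext i
  have him : (i : ℕ) < n - 1 := i.isLt
  have hi1 : (i : ℕ) < n := by omega
  have hi2 : (i : ℕ) + 1 < n := by omega
  have e1 : Wof (n-1) w (i : ℕ) = 1 ↔ Wof (n-1) w' (i : ℕ) = 1 := by
    have c1 := psi_nmax hg hmn (⟨(i : ℕ), hi1⟩ : Fin n)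
    have c2 := psi_nmax hg' hmn (⟨(i : ℕ), hi1⟩ : Fin n)
    rw [h] at c1
    rw [← c1, ← c2]
  have e2 : Wof (n-1) w (i : ℕ) = -1 ↔ Wof (n-1) w' (i : ℕ) = -1 := by
    have c1 := psi_nmin hg (⟨(i : ℕ) + 1, hi2⟩ : Fin n)
    have c2 := psi_nmin hg' (⟨(i : ℕ) + 1, hi2⟩ : Fin n)
    rw [h] at c1
    have h3 : IsCl (Wof (n-1) w) ((i : ℕ) + 1) ↔ IsCl (Wof (n-1) w') ((i : ℕ) + 1) := by
      rw [← c1, ← c2]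
    simp only [IsCl, Nat.add_sub_cancel] at h3
    constructor
    · intro hv; exact (h3.1 ⟨by omega, hv⟩).2
    · intro hv; exact (h3.2 ⟨by omega, hv⟩).2
  have hv : Wof (n-1) w (i : ℕ) = w i := by simp [Wof, him]
  have hv' : Wof (n-1) w' (i : ℕ) = w' i := by simp [Wof, him]
  rw [hv, hv'] at e1 e2
  rcases hw.1 i with h1 | h1 | h1 <;> rcases hw'.1 i with h2 | h2 | h2 <;>
    simp_all

section Part
variable {n : ℕ} {P : Finset (Finset (Fin n))}

/-- the block containing x -/
noncomputable def blkP (hp : IsPartition n P) (x : Fin n) : Finset (Fin n) :=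
  (hp.2 x).exists.choose

lemma blkP_mem (hp : IsPartition n P) (x : Fin n) : blkP hp x ∈ P :=
  (hp.2 x).exists.choose_spec.1

lemma blkP_self (hp : IsPartition n P) (x : Fin n) : x ∈ blkP hp x :=
  (hp.2 x).exists.choose_spec.2

lemma blkP_unique (hp : IsPartition n P) {B : Finset (Fin n)} {x : Fin n}
    (hB : B ∈ P) (hx : x ∈ B) : B = blkP hp x := by
  obtain ⟨C, _, hu⟩ := hp.2 x
  rw [hu B ⟨hB, hx⟩, hu (blkP hp x) ⟨blkP_mem hp x, blkP_self hp x⟩]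

lemma blkP_eq_of_mem (hp : IsPartition n P) {x y : Fin n}
    (h : y ∈ blkP hp x) : blkP hp y = blkP hp x :=
  (blkP_unique hp (blkP_mem hp x) h).symm

lemma nmax_iff (hp : IsPartition n P) {x : Fin n} :
    NMax n P x ↔ ∃ y ∈ blkP hp x, x < y := by
  constructor
  · rintro ⟨B, hB, hxB, y, hyB, hxy⟩
    exact ⟨y, (blkP_unique hp hB hxB) ▸ hyB, hxy⟩
  · rintro ⟨y, hy, hxy⟩
    exact ⟨blkP hp x, blkP_mem hp x, blkP_self hp x, y, hy, hxy⟩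

lemma nmin_iff (hp : IsPartition n P) {x : Fin n} :
    NMin n P x ↔ ∃ y ∈ blkP hp x, y < x := by
  constructor
  · rintro ⟨B, hB, hxB, y, hyB, hxy⟩
    exact ⟨y, (blkP_unique hp hB hxB) ▸ hyB, hxy⟩
  · rintro ⟨y, hy, hxy⟩
    exact ⟨blkP hp x, blkP_mem hp x, blkP_self hp x, y, hy, hxy⟩

/-- the previous element in the block of x -/
noncomputable def predP (hp : IsPartition n P) (x : Fin n) : Fin n :=
  if h : ((blkP hp x).filter (· < x)).Nonempty then ((blkP hp x).filter (· < x)).max' h else x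

lemma nmin_nonempty (hp : IsPartition n P) {x : Fin n} (h : NMin n P x) :
    ((blkP hp x).filter (· < x)).Nonempty := by
  obtain ⟨y, hy, hxy⟩ := (nmin_iff hp).1 h
  exact ⟨y, Finset.mem_filter.2 ⟨hy, hxy⟩⟩

lemma predP_mem (hp : IsPartition n P) {x : Fin n} (h : NMin n P x) :
    predP hp x ∈ blkP hp x := by
  rw [predP, dif_pos (nmin_nonempty hp h)]
  exact (Finset.mem_filter.1 (Finset.max'_mem ((blkP hp x).filter (· < x)) (nmin_nonempty hp h))).1

lemma predP_lt (hp : IsPartition n P) {x : Fin n} (h : NMin n P x) :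
    predP hp x < x := by
  rw [predP, dif_pos (nmin_nonempty hp h)]
  exact (Finset.mem_filter.1 (Finset.max'_mem ((blkP hp x).filter (· < x)) (nmin_nonempty hp h))).2

lemma predP_max (hp : IsPartition n P) {x z : Fin n} (h : NMin n P x)
    (hz : z ∈ blkP hp x) (hzx : z < x) : z ≤ predP hp x := by
  rw [predP, dif_pos (nmin_nonempty hp h)]
  exact Finset.le_max' ((blkP hp x).filter (· < x)) z (Finset.mem_filter.2 ⟨hz, hzx⟩)

/-- the next element in the block of x -/
noncomputable def succP (hp : IsPartition n P) (x : Fin n) : Fin n :=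
  if h : ((blkP hp x).filter (x < ·)).Nonempty then ((blkP hp x).filter (x < ·)).min' h else x

lemma nmax_nonempty (hp : IsPartition n P) {x : Fin n} (h : NMax n P x) :
    ((blkP hp x).filter (x < ·)).Nonempty := by
  obtain ⟨y, hy, hxy⟩ := (nmax_iff hp).1 h
  exact ⟨y, Finset.mem_filter.2 ⟨hy, hxy⟩⟩

lemma succP_mem (hp : IsPartition n P) {x : Fin n} (h : NMax n P x) :
    succP hp x ∈ blkP hp x := by
  rw [succP, dif_pos (nmax_nonempty hp h)]
  exact (Finset.mem_filter.1 (Finset.min'_mem ((blkP hp x).filter (x < ·)) (nmax_nonempty hp h))).1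

lemma succP_gt (hp : IsPartition n P) {x : Fin n} (h : NMax n P x) :
    x < succP hp x := by
  rw [succP, dif_pos (nmax_nonempty hp h)]
  exact (Finset.mem_filter.1 (Finset.min'_mem ((blkP hp x).filter (x < ·)) (nmax_nonempty hp h))).2

lemma succP_min (hp : IsPartition n P) {x z : Fin n} (h : NMax n P x)
    (hz : z ∈ blkP hp x) (hzx : x < z) : succP hp x ≤ z := by
  rw [succP, dif_pos (nmax_nonempty hp h)]
  exact Finset.min'_le ((blkP hp x).filter (x < ·)) z (Finset.mem_filter.2 ⟨hz, hzx⟩)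

/-- predP determines the element: it is the previous element of x in its block -/
lemma predP_inj (hp : IsPartition n P) {x y : Fin n} (hx : NMin n P x) (hy : NMin n P y)
    (h : predP hp x = predP hp y) : x = y := by
  have hbx : blkP hp (predP hp x) = blkP hp x := blkP_eq_of_mem hp (predP_mem hp hx)
  have hby : blkP hp (predP hp y) = blkP hp y := blkP_eq_of_mem hp (predP_mem hp hy)
  have hbb : blkP hp x = blkP hp y := by rw [← hbx, h, hby]
  rcases lt_trichotomy x y with hlt | he | hlt
  · exfalso
    have : x ≤ predP hp y := predP_max hp hy (hbb ▸ blkP_self hp x) hlt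
    have h2 := predP_lt hp hx
    rw [← h] at this
    exact absurd (lt_of_le_of_lt this h2) (lt_irrefl x)
  · exact he
  · exfalso
    have : y ≤ predP hp x := predP_max hp hx (hbb ▸ blkP_self hp y) hlt
    have h2 := predP_lt hp hy
    rw [h] at this
    exact absurd (lt_of_le_of_lt this h2) (lt_irrefl y)

/-- no element is both non-max and followed by a non-min (key consequence of
noncrossing + no-consecutive) -/
lemma no_open_close (hp : IsPartition n P) (hnc : NCPart n P) (hcons : NoConsec n P)
    {x y : Fin n} (hxy : (x : ℕ) + 1 = (y : ℕ)) (h1 : NMax n P x) (h2 : NMin n P y) :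
    False := by
  obtain ⟨x', hx', hxx'⟩ := (nmax_iff hp).1 h1
  obtain ⟨y', hy', hyy'⟩ := (nmin_iff hp).1 h2
  by_cases hBC : blkP hp x = blkP hp y
  · -- x and y = x+1 in the same block
    exact hcons _ (blkP_mem hp x) x (blkP_self hp x) y (hBC ▸ blkP_self hp y) hxy
  · -- crossing y' < x < y < x'
    have hy'x : y' < x := by
      have h3 : (y' : ℕ) < (y : ℕ) := hyy'
      have hne : y' ≠ x := fun he => hBC (blkP_eq_of_mem hp (he ▸ hy'))
      have hvne : (y' : ℕ) ≠ (x : ℕ) := fun hc => hne (Fin.ext hc)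
      exact Fin.lt_def.2 (by omega)
    have hyx' : y < x' := by
      have h3 : (x : ℕ) < (x' : ℕ) := hxx'
      have hne : x' ≠ y := fun he => hBC (blkP_eq_of_mem hp (he ▸ hx')).symm
      have hvne : (x' : ℕ) ≠ (y : ℕ) := fun hc => hne (Fin.ext hc)
      exact Fin.lt_def.2 (by omega)
    exact hnc (blkP hp y) (blkP_mem hp y) (blkP hp x) (blkP_mem hp x)
      (fun h => hBC h.symm) y' hy' y (blkP_self hp y) x (blkP_self hp x) x' hx'
      ⟨hy'x, Fin.lt_def.2 (by omega), hyx'⟩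

end Part

/-! ### the path associated to a partition -/

open Classical in
noncomputable def PhiW (n : ℕ) (P : Finset (Finset (Fin n))) : ℕ → ℤ := fun i =>
  if h : i + 1 < n then
    (if NMax n P ⟨i, by omega⟩ then 1 else 0) - (if NMin n P ⟨i + 1, h⟩ then 1 else 0)
  else 0

section Phi
variable {n : ℕ} {P : Finset (Finset (Fin n))}

open Classical

lemma PhiW_zero (k : ℕ) (hk : n - 1 ≤ k) : PhiW n P k = 0 := by
  rw [PhiW, dif_neg (by omega)]

/-- counting sets -/
noncomputable def Ak (n : ℕ) (P : Finset (Finset (Fin n))) (k : ℕ) : Finset (Fin n) :=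
  Finset.univ.filter (fun x : Fin n => (x : ℕ) < k ∧ NMax n P x)
noncomputable def Bk (n : ℕ) (P : Finset (Finset (Fin n))) (k : ℕ) : Finset (Fin n) :=
  Finset.univ.filter (fun x : Fin n => (x : ℕ) < k + 1 ∧ NMin n P x)

lemma card_filter_step {k : ℕ} (hk : k < n) (q : Fin n → Prop) [DecidablePred q] :
    (Finset.univ.filter (fun x : Fin n => (x : ℕ) < k + 1 ∧ q x)).card
      = (Finset.univ.filter (fun x : Fin n => (x : ℕ) < k ∧ q x)).card
        + (if q ⟨k, hk⟩ then 1 else 0) := by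
  have hsplit : Finset.univ.filter (fun x : Fin n => (x : ℕ) < k + 1 ∧ q x)
      = (Finset.univ.filter (fun x : Fin n => (x : ℕ) < k ∧ q x))
        ∪ (Finset.univ.filter (fun x : Fin n => x = ⟨k, hk⟩ ∧ q x)) := by
    ext x
    simp only [Finset.mem_filter, Finset.mem_union, Finset.mem_univ, true_and]
    constructor
    · rintro ⟨h1, h2⟩
      rcases Nat.lt_or_ge (x : ℕ) k with h | h
      · exact Or.inl ⟨h, h2⟩
      · exact Or.inr ⟨Fin.ext (by simp only [Fin.val_mk]; omega), h2⟩
    · rintro (⟨h1, h2⟩ | ⟨h1, h2⟩)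
      · exact ⟨by omega, h2⟩
      · refine ⟨?_, h2⟩
        rw [h1]
        simp only [Fin.val_mk]
        omega
  have hdisj : Disjoint (Finset.univ.filter (fun x : Fin n => (x : ℕ) < k ∧ q x))
      (Finset.univ.filter (fun x : Fin n => x = ⟨k, hk⟩ ∧ q x)) := by
    rw [Finset.disjoint_left]
    intro x hx hx'
    simp only [Finset.mem_filter] at hx hx'
    have := hx.2.1
    rw [hx'.2.1] at this
    simp at this
  rw [hsplit, Finset.card_union_of_disjoint hdisj]
  congr 1
  by_cases hq : q ⟨k, hk⟩
  · rw [if_pos hq]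
    have : Finset.univ.filter (fun x : Fin n => x = ⟨k, hk⟩ ∧ q x) = {⟨k, hk⟩} := by
      ext x
      simp only [Finset.mem_filter, Finset.mem_univ, true_and, Finset.mem_singleton]
      constructor
      · exact fun h => h.1
      · rintro rfl; exact ⟨rfl, hq⟩
    rw [this, Finset.card_singleton]
  · rw [if_neg hq]
    have : Finset.univ.filter (fun x : Fin n => x = ⟨k, hk⟩ ∧ q x) = ∅ := by
      ext x
      simp only [Finset.mem_filter, Finset.mem_univ, true_and, Finset.notMem_empty,
        iff_false, not_and]
      rintro rfl hq'
      exact hq hq'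
    rw [this, Finset.card_empty]

lemma NMin_zero_false {x : Fin n} (hx : (x : ℕ) = 0) : ¬ NMin n P x := by
  rintro ⟨B, _, _, y, _, hyx⟩
  have : (y : ℕ) < (x : ℕ) := hyx
  omega

lemma Hgt_PhiW_count : ∀ k, k ≤ n - 1 →
    Hgt (PhiW n P) k = ((Ak n P k).card : ℤ) - ((Bk n P k).card : ℤ) := by
  intro k
  induction k with
  | zero =>
    intro _
    have hA : Ak n P 0 = ∅ := by
      ext x; simp [Ak]
    have hB : Bk n P 0 = ∅ := by
      ext x
      simp only [Bk, Finset.mem_filter, Finset.mem_univ, true_and, Finset.notMem_empty,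
        iff_false, not_and]
      intro h1
      exact NMin_zero_false (by omega)
    rw [Hgt0, hA, hB]
    simp
  | succ k ih =>
    intro hk
    have hk1 : k < n - 1 := by omega
    have hkn : k < n := by omega
    have hk1n : k + 1 < n := by omega
    rw [Hgt_succ, ih (by omega)]
    have hstep : PhiW n P k = (if NMax n P ⟨k, hkn⟩ then 1 else 0)
        - (if NMin n P ⟨k + 1, hk1n⟩ then 1 else 0) := by
      rw [PhiW, dif_pos hk1n]
    have hA := card_filter_step hkn (NMax n P)
    have hB := card_filter_step hk1n (NMin n P)
    have hAk : (Ak n P (k+1)).card = (Ak n P k).card + (if NMax n P ⟨k, hkn⟩ then 1 else 0) := hA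
    have hBk : (Bk n P (k+1)).card = (Bk n P k).card + (if NMin n P ⟨k+1, hk1n⟩ then 1 else 0) := hB
    rw [hstep, hAk, hBk]
    push_cast
    split_ifs <;> ring

end Phi

section Phi2
variable {n : ℕ} {P : Finset (Finset (Fin n))}

lemma succP_inj (hp : IsPartition n P) {x y : Fin n} (hx : NMax n P x) (hy : NMax n P y)
    (h : succP hp x = succP hp y) : x = y := by
  have hbx : blkP hp (succP hp x) = blkP hp x := blkP_eq_of_mem hp (succP_mem hp hx)
  have hby : blkP hp (succP hp y) = blkP hp y := blkP_eq_of_mem hp (succP_mem hp hy)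
  have hbb : blkP hp x = blkP hp y := by rw [← hbx, h, hby]
  rcases lt_trichotomy x y with hlt | he | hlt
  · exfalso
    have h3 : succP hp x ≤ y := succP_min hp hx (hbb.symm ▸ blkP_self hp y) hlt
    have h2 := succP_gt hp hy
    rw [h] at h3
    exact absurd (lt_of_lt_of_le h2 h3) (lt_irrefl y)
  · exact he
  · exfalso
    have h3 : succP hp y ≤ x := succP_min hp hy (hbb ▸ blkP_self hp x) hlt
    have h2 := succP_gt hp hx
    rw [← h] at h3
    exact absurd (lt_of_lt_of_le h2 h3) (lt_irrefl x)

lemma NMax_pred (hp : IsPartition n P) {x : Fin n} (h : NMin n P x) :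
    NMax n P (predP hp x) := by
  refine (nmax_iff hp).2 ⟨x, ?_, predP_lt hp h⟩
  rw [blkP_eq_of_mem hp (predP_mem hp h)]
  exact blkP_self hp x

lemma NMin_succ (hp : IsPartition n P) {x : Fin n} (h : NMax n P x) :
    NMin n P (succP hp x) := by
  refine (nmin_iff hp).2 ⟨x, ?_, succP_gt hp h⟩
  rw [blkP_eq_of_mem hp (succP_mem hp h)]
  exact blkP_self hp x

lemma card_B_le_A (hp : IsPartition n P) (k : ℕ) :
    (Bk n P k).card ≤ (Ak n P k).card := by
  apply Finset.card_le_card_of_injOn (predP hp)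
  · intro x hx
    simp only [Bk, Finset.mem_coe, Finset.mem_filter, Finset.mem_univ, true_and] at hx
    obtain ⟨hxk, hmin⟩ := hx
    simp only [Ak, Finset.mem_coe, Finset.mem_filter, Finset.mem_univ, true_and]
    have hlt : predP hp x < x := predP_lt hp hmin
    have : (predP hp x : ℕ) < (x : ℕ) := hlt
    exact ⟨by omega, NMax_pred hp hmin⟩
  · intro x hx y hy hxy
    simp only [Bk, Finset.coe_filter, Finset.mem_univ, Set.mem_setOf_eq, true_and] at hx hy
    exact predP_inj hp hx.2 hy.2 hxy

lemma NMax_lt (hp : IsPartition n P) {x : Fin n} (h : NMax n P x) : (x : ℕ) < n - 1 := by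
  obtain ⟨y, _, hxy⟩ := (nmax_iff hp).1 h
  have h1 : (x : ℕ) < (y : ℕ) := hxy
  have h2 : (y : ℕ) < n := y.isLt
  omega

lemma card_A_le_B_top (hp : IsPartition n P) :
    (Ak n P (n-1)).card ≤ (Bk n P (n-1)).card := by
  apply Finset.card_le_card_of_injOn (succP hp)
  · intro x hx
    simp only [Ak, Finset.mem_coe, Finset.mem_filter, Finset.mem_univ, true_and] at hx
    simp only [Bk, Finset.mem_coe, Finset.mem_filter, Finset.mem_univ, true_and]
    have : (succP hp x : ℕ) < n := (succP hp x).isLt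
    exact ⟨by omega, NMin_succ hp hx.2⟩
  · intro x hx y hy hxy
    simp only [Ak, Finset.coe_filter, Finset.mem_univ, Set.mem_setOf_eq, true_and] at hx hy
    exact succP_inj hp hx.2 hy.2 hxy

lemma goodW_PhiW (hp : IsPartition n P) : GoodW (n - 1) (PhiW n P) := by
  have hz : ∀ k, n - 1 ≤ k → PhiW n P k = 0 := fun k hk => PhiW_zero k hk
  refine ⟨?_, ?_, hz, ?_⟩
  · intro i
    rw [PhiW]
    split_ifs <;> norm_num
  · intro k
    rw [Hgt_min hz k]
    have hm : min k (n-1) ≤ n - 1 := min_le_right _ _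
    rw [Hgt_PhiW_count _ hm]
    have := card_B_le_A hp (min k (n-1))
    have h2 : ((Bk n P (min k (n-1))).card : ℤ) ≤ ((Ak n P (min k (n-1))).card : ℤ) := by
      exact_mod_cast this
    omega
  · rw [Hgt_PhiW_count _ (le_refl _)]
    have h1 := card_B_le_A hp (n-1)
    have h2 := card_A_le_B_top hp
    have : (Ak n P (n-1)).card = (Bk n P (n-1)).card := le_antisymm h2 h1
    rw [this]
    ring

end Phi2

section Phi3
variable {n : ℕ} {P : Finset (Finset (Fin n))}

open Classical

lemma phi_nmax (hp : IsPartition n P) (hnc : NCPart n P) (hcons : NoConsec n P)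
    (x : Fin n) : NMax n P x ↔ PhiW n P (x : ℕ) = 1 := by
  by_cases hv : (x : ℕ) + 1 < n
  · have he1 : (⟨(x : ℕ), by omega⟩ : Fin n) = x := Fin.ext rfl
    rw [PhiW]
    simp only [dif_pos hv, he1]
    constructor
    · intro h
      have hmin : ¬ NMin n P ⟨(x : ℕ) + 1, hv⟩ := fun hm =>
        no_open_close hp hnc hcons (by simp) h hm
      rw [if_pos h, if_neg hmin]
      ring
    · intro h
      by_contra hc
      rw [if_neg hc] at h
      split_ifs at h <;> omega
  · constructor
    · intro h
      exact absurd (NMax_lt hp h) (by omega)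
    · intro h
      rw [PhiW, dif_neg hv] at h
      omega

lemma phi_nmin (hp : IsPartition n P) (hnc : NCPart n P) (hcons : NoConsec n P)
    (x : Fin n) : NMin n P x ↔ 0 < (x : ℕ) ∧ PhiW n P ((x : ℕ) - 1) = -1 := by
  constructor
  · intro h
    have hx0 : 0 < (x : ℕ) := by
      by_contra hc
      exact NMin_zero_false (by omega) h
    have hv : (x : ℕ) - 1 + 1 < n := by have := x.isLt; omega
    have he1 : (⟨(x : ℕ) - 1 + 1, hv⟩ : Fin n) = x := Fin.ext (by simp; omega)
    refine ⟨hx0, ?_⟩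
    rw [PhiW, dif_pos hv]
    have hmax : ¬ NMax n P ⟨(x : ℕ) - 1, by omega⟩ := fun hm =>
      no_open_close hp hnc hcons (by simp) hm (he1 ▸ h)
    rw [if_neg hmax, he1, if_pos h]
    ring
  · rintro ⟨hx0, h⟩
    have hv : (x : ℕ) - 1 + 1 < n := by have := x.isLt; omega
    have he1 : (⟨(x : ℕ) - 1 + 1, hv⟩ : Fin n) = x := Fin.ext (by simp; omega)
    rw [PhiW, dif_pos hv] at h
    by_contra hc
    rw [he1, if_neg hc] at h
    split_ifs at h <;> omega

end Phi3

section Inj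
variable {n : ℕ} {P Q : Finset (Finset (Fin n))}

lemma pred_eq_aux (hpP : IsPartition n P) (hncP : NCPart n P) (hpQ : IsPartition n Q)
    (hmax : ∀ x, NMax n P x ↔ NMax n Q x) (hmin : ∀ x, NMin n P x ↔ NMin n Q x)
    (j : Fin n)
    (IH : ∀ j' : Fin n, (j' : ℕ) < (j : ℕ) → NMin n P j' → predP hpP j' = predP hpQ j')
    (hj : NMin n P j) (hlt : predP hpP j < predP hpQ j) : False := by
  have hjQ : NMin n Q j := (hmin j).1 hj
  have hij : predP hpP j < j := predP_lt hpP hj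
  have hi'j : predP hpQ j < j := predP_lt hpQ hjQ
  have hi'Q : predP hpQ j ∈ blkP hpQ j := predP_mem hpQ hjQ
  have hblkQ : blkP hpQ (predP hpQ j) = blkP hpQ j := blkP_eq_of_mem hpQ hi'Q
  have hNmaxQ : NMax n Q (predP hpQ j) :=
    (nmax_iff hpQ).2 ⟨j, hblkQ ▸ blkP_self hpQ j, hi'j⟩
  have hNmaxP : NMax n P (predP hpQ j) := (hmax _).2 hNmaxQ
  have hnotmem : predP hpQ j ∉ blkP hpP j := by
    intro hmem
    exact absurd (lt_of_lt_of_le hlt (predP_max hpP hj hmem hi'j)) (lt_irrefl _)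
  have hsmem : succP hpP (predP hpQ j) ∈ blkP hpP (predP hpQ j) := succP_mem hpP hNmaxP
  have hi's : predP hpQ j < succP hpP (predP hpQ j) := succP_gt hpP hNmaxP
  have hblkne : blkP hpP (predP hpQ j) ≠ blkP hpP j := by
    intro he
    exact hnotmem (he ▸ blkP_self hpP (predP hpQ j))
  have hsj : succP hpP (predP hpQ j) ≠ j := by
    intro he
    exact hblkne ((blkP_eq_of_mem hpP hsmem).symm.trans (by rw [he]))
  have hnjs : ¬ (j < succP hpP (predP hpQ j)) := by
    intro hjs
    exact hncP (blkP hpP j) (blkP_mem hpP j) (blkP hpP (predP hpQ j))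
      (blkP_mem hpP (predP hpQ j)) (fun he => hblkne he.symm)
      (predP hpP j) (predP_mem hpP hj) j (blkP_self hpP j)
      (predP hpQ j) (blkP_self hpP (predP hpQ j)) (succP hpP (predP hpQ j)) hsmem
      ⟨hlt, hi'j, hjs⟩
  have hsltj : succP hpP (predP hpQ j) < j :=
    lt_of_le_of_ne (not_lt.1 hnjs) hsj
  have hsblk : blkP hpP (succP hpP (predP hpQ j)) = blkP hpP (predP hpQ j) :=
    blkP_eq_of_mem hpP hsmem
  have hsmin : NMin n P (succP hpP (predP hpQ j)) :=
    (nmin_iff hpP).2 ⟨predP hpQ j, hsblk ▸ blkP_self hpP (predP hpQ j), hi's⟩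
  have hpredPs : predP hpP (succP hpP (predP hpQ j)) = predP hpQ j := by
    refine le_antisymm ?_ (predP_max hpP hsmin (hsblk ▸ blkP_self hpP (predP hpQ j)) hi's)
    by_contra hc
    push_neg at hc
    have h1 : predP hpP (succP hpP (predP hpQ j)) ∈ blkP hpP (predP hpQ j) :=
      hsblk ▸ predP_mem hpP hsmin
    have h2 : succP hpP (predP hpQ j) ≤ predP hpP (succP hpP (predP hpQ j)) :=
      succP_min hpP hNmaxP h1 hc
    exact absurd (lt_of_le_of_lt h2 (predP_lt hpP hsmin)) (lt_irrefl _)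
  have hpredQs : predP hpQ (succP hpP (predP hpQ j)) = predP hpQ j := by
    rw [← IH _ hsltj hsmin]
    exact hpredPs
  -- now in Q: succ and j both have predecessor predP hpQ j
  have hsminQ : NMin n Q (succP hpP (predP hpQ j)) := (hmin _).1 hsmin
  have := predP_inj hpQ hsminQ hjQ hpredQs
  exact hsj this

lemma pred_eq (hpP : IsPartition n P) (hncP : NCPart n P)
    (hpQ : IsPartition n Q) (hncQ : NCPart n Q)
    (hmax : ∀ x, NMax n P x ↔ NMax n Q x) (hmin : ∀ x, NMin n P x ↔ NMin n Q x) :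
    ∀ j : Fin n, NMin n P j → predP hpP j = predP hpQ j := by
  have H : ∀ k : ℕ, ∀ j : Fin n, (j : ℕ) = k → NMin n P j → predP hpP j = predP hpQ j := by
    intro k
    induction k using Nat.strong_induction_on with
    | _ k IHk =>
      intro j hjk hj
      have IH : ∀ j' : Fin n, (j' : ℕ) < (j : ℕ) → NMin n P j' → predP hpP j' = predP hpQ j' :=
        fun j' h hm => IHk _ (hjk ▸ h) j' rfl hm
      rcases lt_trichotomy (predP hpP j) (predP hpQ j) with h | h | h
      · exact absurd h (fun h => pred_eq_aux hpP hncP hpQ hmax hmin j IH hj h)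
      · exact h
      · exfalso
        have IH' : ∀ j' : Fin n, (j' : ℕ) < (j : ℕ) → NMin n Q j' →
            predP hpQ j' = predP hpP j' :=
          fun j' hlt hm => (IH j' hlt ((hmin j').2 hm)).symm
        exact pred_eq_aux hpQ hncQ hpP (fun x => (hmax x).symm) (fun x => (hmin x).symm)
          j IH' ((hmin j).1 hj) h
  exact fun j => H (j : ℕ) j rfl

lemma blk_iff (hpP : IsPartition n P) (hpQ : IsPartition n Q)
    (hmin : ∀ x, NMin n P x ↔ NMin n Q x)
    (hpred : ∀ j : Fin n, NMin n P j → predP hpP j = predP hpQ j) :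
    ∀ y x : Fin n, x ≤ y → (blkP hpP x = blkP hpP y ↔ blkP hpQ x = blkP hpQ y) := by
  have H : ∀ k : ℕ, ∀ y x : Fin n, (y : ℕ) = k → x ≤ y →
      (blkP hpP x = blkP hpP y ↔ blkP hpQ x = blkP hpQ y) := by
    intro k
    induction k using Nat.strong_induction_on with
    | _ k IHk =>
      intro y x hyk hxy
      rcases eq_or_lt_of_le hxy with he | hxy
      · rw [he]; simp
      constructor
      · intro h
        have hyP : NMin n P y := (nmin_iff hpP).2 ⟨x, h ▸ blkP_self hpP x, hxy⟩
        have hyQ : NMin n Q y := (hmin y).1 hyP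
        have hpe : predP hpP y = predP hpQ y := hpred y hyP
        have hxp : x ≤ predP hpP y := predP_max hpP hyP (h ▸ blkP_self hpP x) hxy
        have h1 : blkP hpP x = blkP hpP (predP hpP y) := by
          rw [blkP_eq_of_mem hpP (predP_mem hpP hyP), h]
        have h2 : blkP hpQ x = blkP hpQ (predP hpP y) :=
          (IHk _ (by rw [← hyk]; exact_mod_cast predP_lt hpP hyP) _ _ rfl hxp).1 h1
        rw [h2, hpe, blkP_eq_of_mem hpQ (predP_mem hpQ hyQ)]
      · intro h
        have hyQ : NMin n Q y := (nmin_iff hpQ).2 ⟨x, h ▸ blkP_self hpQ x, hxy⟩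
        have hyP : NMin n P y := (hmin y).2 hyQ
        have hpe : predP hpP y = predP hpQ y := hpred y hyP
        have hxp : x ≤ predP hpQ y := predP_max hpQ hyQ (h ▸ blkP_self hpQ x) hxy
        have h1 : blkP hpQ x = blkP hpQ (predP hpQ y) := by
          rw [blkP_eq_of_mem hpQ (predP_mem hpQ hyQ), h]
        have h2 : blkP hpP x = blkP hpP (predP hpQ y) :=
          (IHk _ (by rw [← hyk]; exact_mod_cast predP_lt hpQ hyQ) _ _ rfl hxp).2 h1
        rw [h2, ← hpe, blkP_eq_of_mem hpP (predP_mem hpP hyP)]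
  exact fun y x h => H (y : ℕ) y x rfl h

lemma blk_eq (hpP : IsPartition n P) (hpQ : IsPartition n Q)
    (hmin : ∀ x, NMin n P x ↔ NMin n Q x)
    (hpred : ∀ j : Fin n, NMin n P j → predP hpP j = predP hpQ j) :
    ∀ x, blkP hpP x = blkP hpQ x := by
  intro x
  ext y
  have hP : y ∈ blkP hpP x ↔ blkP hpP y = blkP hpP x :=
    ⟨fun h => blkP_eq_of_mem hpP h, fun h => h ▸ blkP_self hpP y⟩
  have hQ : y ∈ blkP hpQ x ↔ blkP hpQ y = blkP hpQ x :=
    ⟨fun h => blkP_eq_of_mem hpQ h, fun h => h ▸ blkP_self hpQ y⟩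
  rw [hP, hQ]
  rcases le_total y x with h | h
  · exact blk_iff hpP hpQ hmin hpred x y h
  · rw [eq_comm, @eq_comm _ (blkP hpQ y)]
    exact blk_iff hpP hpQ hmin hpred y x h

lemma part_eq (hpP : IsPartition n P) (hpQ : IsPartition n Q)
    (hblk : ∀ x, blkP hpP x = blkP hpQ x) : P = Q := by
  have him : ∀ (R : Finset (Finset (Fin n))) (hpR : IsPartition n R),
      R = Finset.univ.image (blkP hpR) := by
    intro R hpR
    ext B
    simp only [Finset.mem_image, Finset.mem_univ, true_and]
    constructor
    · intro hB
      obtain ⟨x, hx⟩ := hpR.1 B hB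
      exact ⟨x, (blkP_unique hpR hB hx).symm⟩
    · rintro ⟨x, rfl⟩
      exact blkP_mem hpR x
  rw [him P hpP, him Q hpQ]
  exact Finset.image_congr (fun x _ => hblk x)

/-- Φ is injective -/
lemma phi_inj (hpP : IsPartition n P) (hncP : NCPart n P) (hconsP : NoConsec n P)
    (hpQ : IsPartition n Q) (hncQ : NCPart n Q) (hconsQ : NoConsec n Q)
    (h : PhiW n P = PhiW n Q) : P = Q := by
  have hmax : ∀ x, NMax n P x ↔ NMax n Q x := by
    intro x
    rw [phi_nmax hpP hncP hconsP, phi_nmax hpQ hncQ hconsQ, h]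
  have hmin : ∀ x, NMin n P x ↔ NMin n Q x := by
    intro x
    rw [phi_nmin hpP hncP hconsP, phi_nmin hpQ hncQ hconsQ, h]
  exact part_eq hpP hpQ
    (blk_eq hpP hpQ hmin (pred_eq hpP hncP hpQ hncQ hmax hmin))

end Inj

/-! ### assembly -/

noncomputable def PhiF (n : ℕ) (P : Finset (Finset (Fin n))) : Fin (n - 1) → ℤ :=
  fun i => PhiW n P (i : ℕ)

lemma Wof_PhiF (n : ℕ) (P : Finset (Finset (Fin n))) :
    Wof (n - 1) (PhiF n P) = PhiW n P := by
  funext i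
  by_cases h : i < n - 1
  · simp [Wof, h, PhiF]
  · rw [Wof]
    simp only [h, dif_neg, not_false_iff]
    exact (PhiW_zero i (by omega)).symm

lemma motzkin_PhiF {n : ℕ} {P : Finset (Finset (Fin n))} (hp : IsPartition n P) :
    IsMotzkin (n - 1) (PhiF n P) :=
  motzkin_of_goodW (by rw [Wof_PhiF]; exact goodW_PhiW hp)

noncomputable def PsiSub (n : ℕ) :
    {w : Fin (n - 1) → ℤ // IsMotzkin (n - 1) w} →
      {P : Finset (Finset (Fin n)) // IsPartition n P ∧ NCPart n P ∧ NoConsec n P} :=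
  fun p => ⟨PsiP (Wof (n - 1) p.1) n, PsiP_isPartition _ _,
    PsiP_nc (goodW_of_motzkin p.2) n, PsiP_noConsec (goodW_of_motzkin p.2) n⟩

noncomputable def PhiSub (n : ℕ) :
    {P : Finset (Finset (Fin n)) // IsPartition n P ∧ NCPart n P ∧ NoConsec n P} →
      {w : Fin (n - 1) → ℤ // IsMotzkin (n - 1) w} :=
  fun q => ⟨PhiF n q.1, motzkin_PhiF q.2.1⟩

lemma PsiSub_inj (n : ℕ) (hn : 1 ≤ n) : Function.Injective (PsiSub n) := by
  rintro ⟨w, hw⟩ ⟨w', hw'⟩ h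
  simp only [PsiSub, Subtype.mk_eq_mk] at h
  exact Subtype.ext (psi_inj hn hw hw' h)

lemma PhiSub_inj (n : ℕ) : Function.Injective (PhiSub n) := by
  rintro ⟨P, hP⟩ ⟨Q, hQ⟩ h
  simp only [PhiSub, Subtype.mk_eq_mk] at h
  refine Subtype.ext (phi_inj hP.1 hP.2.1 hP.2.2 hQ.1 hQ.2.1 hQ.2.2 ?_)
  rw [← Wof_PhiF n P, ← Wof_PhiF n Q, h]

end S12

/-- there is a bijection between Motzkin paths from `(0,0)` to
`(n-1,0)` and noncrossing partitions of `{1,…,n}` with no block containing two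
consecutive integers. -/
theorem statement12 (n : ℕ) (hn : 1 ≤ n) :
    Nonempty ({w : Fin (n - 1) → ℤ // IsMotzkin (n - 1) w} ≃
      {P : Finset (Finset (Fin n)) // IsPartition n P ∧ NCPart n P ∧ NoConsec n P}) := by
  classical
  letI : Fintype {w : Fin (n - 1) → ℤ // IsMotzkin (n - 1) w} := by
    apply Fintype.ofInjective
      (f := fun p : {w : Fin (n - 1) → ℤ // IsMotzkin (n - 1) w} =>
        (fun i => (if p.1 i = 1 then (0 : Fin 3) else if p.1 i = -1 then 1 else 2)))
    intro p q h
    apply Subtype.ext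
    funext i
    have hi := congrFun h i
    rcases p.2.1 i with h1 | h1 | h1 <;> rcases q.2.1 i with h2 | h2 | h2 <;>
      rw [h1, h2] <;> simp [h1, h2] at hi ⊢
  letI : Fintype {P : Finset (Finset (Fin n)) //
      IsPartition n P ∧ NCPart n P ∧ NoConsec n P} := Subtype.fintype _
  have h1 := Fintype.card_le_of_injective _ (S12.PsiSub_inj n hn)
  have h2 := Fintype.card_le_of_injective _ (S12.PhiSub_inj n)
  exact Fintype.card_eq.1 (le_antisymm h1 h2)
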